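/- The language Pal = {w w^R : w ∈ {0,1}*} belongs to DCFL/n: there exist an advice function h with |h(n)| = n and a deterministic context-free language L over a track alphabet such that for all x ∈ {0,1}*, x ∈ Pal iff ⟨x, h(|x|)⟩ ∈ L. An explicit choice is h(0) = λ, h(n) = 0^{n/2−1}101^{n/2−1} for even n ≥ 2, and h(n) = 1ⁿ for odd n, where the advice marks the midpoint so a deterministic pushdown automaton can simulate recognition of {w#w^R : w ∈ {0,1}*}. -/

import Mathlib

/-- A deterministic pushdown automaton (with ε-moves), with state type `Q`,
input alphabet `α` and stack alphabet `Γ`. -/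
structure DPDA (α Q Γ : Type) where
  start : Q
  startSym : Γ
  step : Q → Option α → Γ → Option (Q × List Γ)
  final : Set Q
  deterministic : ∀ q γ, (step q none γ).isSome → ∀ a, step q (some a) γ = none

/-- `M.Steps c x c'` : the DPDA `M` can go from configuration `c`
(state, stack) to configuration `c'` while consuming the input string `x`. -/
inductive DPDA.Steps {α Q Γ : Type} (M : DPDA α Q Γ) :
    Q × List Γ → List α → Q × List Γ → Prop
  | refl (c) : DPDA.Steps M c [] c
  | read {q a t s q' u w c} : M.step q (some a) t = some (q', u) →
      DPDA.Steps M (q', u ++ s) w c → DPDA.Steps M (q, t :: s) (a :: w) c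
  | eps {q t s q' u w c} : M.step q none t = some (q', u) →
      DPDA.Steps M (q', u ++ s) w c → DPDA.Steps M (q, t :: s) w c

/-- The language accepted by a DPDA (by final state). -/
def DPDA.accepts {α Q Γ : Type} (M : DPDA α Q Γ) : Language α :=
  { x | ∃ q s, M.Steps (M.start, [M.startSym]) x (q, s) ∧ q ∈ M.final }

/-- A deterministic context-free language: one accepted by a DPDA with
finitely many states and stack symbols. -/
def IsDCFL {σ : Type} (P : Language σ) : Prop :=
  ∃ (Q Γ : Type) (_ : Fintype Q) (_ : Fintype Γ) (M : DPDA σ Q Γ),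
    M.accepts = P

/-- `DCFL/n`: deterministic context-free languages with length-respecting
advice. -/
def InDCFLn {σ : Type} (P : Language σ) : Prop :=
  ∃ (Γ : Type) (_ : Fintype Γ) (h : ℕ → List Γ),
    (∀ n, (h n).length = n) ∧
    ∃ L : Language (σ × Γ), IsDCFL L ∧
      ∀ x : List σ, x ∈ P ↔ x.zip (h x.length) ∈ L

namespace PalAdv

inductive St | A | P | O | F
  deriving DecidableEq

instance : Fintype St :=
  ⟨⟨{.A, .P, .O, .F}, by decide⟩, fun x => by cases x <;> decide⟩

abbrev Sym := Option Bool

def stepF : St → Option (Bool × Bool) → Sym → Option (St × List Sym)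
  | .A, some (a, false), none => some (.P, [some a, none])
  | .P, some (a, false), some b => some (.P, [some a, some b])
  | .P, some (a, true), some b => if a = b then some (.O, []) else none
  | .O, some (a, true), some b => if a = b then some (.O, []) else none
  | .O, none, none => some (.F, [none])
  | _, _, _ => none

def M : DPDA (Bool × Bool) St Sym where
  start := .A
  startSym := none
  step := stepF
  final := {q | q = .A ∨ q = .F}
  deterministic := by decide

@[simp] lemma M_step : M.step = stepF := rfl
@[simp] lemma M_final : M.final = {q | q = .A ∨ q = .F} := rfl

def enc (w : List Bool) : List (Bool × Bool) :=
  w.map (fun a => (a, false)) ++ w.reverse.map (fun a => (a, true))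

lemma run_pop (u : List Bool) :
    M.Steps (.O, u.map some ++ [none]) (u.map (fun a => (a, true))) (.F, [none]) := by
  induction u with
  | nil =>
    refine DPDA.Steps.eps (t := none) (s := []) (q' := .F) (u := [none])
      (by simp [stepF]) ?_
    simpa using DPDA.Steps.refl (M := M) (.F, [none])
  | cons a u ih =>
    refine DPDA.Steps.read (q' := .O) (u := []) (by simp [stepF]) ?_
    simpa using ih

lemma run_popP (b : Bool) (u : List Bool) :
    M.Steps (.P, some b :: (u.map some ++ [none]))
      ((b, true) :: u.map (fun a => (a, true))) (.F, [none]) := by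
  refine DPDA.Steps.read (q' := .O) (u := []) (by simp [stepF]) ?_
  simpa using run_pop u

lemma run_push : ∀ (v : List Bool) (b : Bool) (s : List Sym) {w c},
    M.Steps (.P, v.reverse.map some ++ (some b :: s)) w c →
    M.Steps (.P, some b :: s) (v.map (fun a => (a, false)) ++ w) c := by
  intro v
  induction v with
  | nil => intro b s w c h; simpa using h
  | cons a v ih =>
    intro b s w c h
    refine DPDA.Steps.read (q' := .P) (u := [some a, some b]) (by simp [stepF]) ?_
    show M.Steps (.P, [some a, some b] ++ s) (v.map (fun a => (a, false)) ++ w) c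
    exact ih a (some b :: s) (by simpa [List.append_assoc] using h)

lemma accepts_enc (w : List Bool) : enc w ∈ M.accepts := by
  cases w with
  | nil => exact ⟨.A, [none], DPDA.Steps.refl _, Or.inl rfl⟩
  | cons a v =>
    refine ⟨.F, [none], ?_, Or.inr rfl⟩
    show M.Steps (.A, [none]) (enc (a :: v)) (.F, [none])
    have h2 : M.Steps (.P, (a :: v).reverse.map some ++ [none])
        ((a :: v).reverse.map (fun x => (x, true))) (.F, [none]) := by
      rcases hr : (a :: v).reverse with _ | ⟨b, u⟩
      · simp at hr
      · simpa using run_popP b u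
    have h3 := run_push v a [none] (by simpa [List.append_assoc] using h2)
    have h4 : M.Steps (.A, [none])
        ((a, false) :: (v.map (fun x => (x, false)) ++
          (a :: v).reverse.map (fun x => (x, true)))) (.F, [none]) := by
      refine DPDA.Steps.read (q' := .P) (u := [some a, none]) (by simp [stepF]) ?_
      simpa using h3
    simpa [enc] using h4

lemma sound : ∀ {c c' : St × List Sym} {y}, M.Steps c y c' →
    (c'.1 = .A ∨ c'.1 = .F) →
    (c = (.A, [none]) → ∃ w, y = enc w) ∧
    (∀ u : List Bool, c = (.P, u.map some ++ [none]) →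
        ∃ v : List Bool, y = v.map (fun a => (a, false)) ++
          (v.reverse ++ u).map (fun a => (a, true))) ∧
    (∀ u : List Bool, c = (.O, u.map some ++ [none]) →
        y = u.map (fun a => (a, true))) ∧
    (c.1 = .F → y = []) := by
  intro c c' y h
  induction h with
  | refl d =>
    intro hf
    refine ⟨?_, ?_, ?_, ?_⟩
    · intro hc; subst hc; exact ⟨[], by simp [enc]⟩
    · intro u hc; subst hc; simp at hf
    · intro u hc; subst hc; simp at hf
    · intro _; rfl
  | @read q a t s q' u w cf hstep hsteps ih =>
    intro hf
    refine ⟨?_, ?_, ?_, ?_⟩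
    · intro hc
      rw [Prod.mk.injEq] at hc
      obtain ⟨rfl, ht⟩ := hc
      obtain ⟨rfl, rfl⟩ : t = none ∧ s = [] := by simpa using ht
      obtain ⟨a₁, a₂⟩ := a
      cases a₂ with
      | false =>
        simp only [M_step, stepF, Option.some.injEq, Prod.mk.injEq] at hstep
        obtain ⟨rfl, rfl⟩ := hstep
        obtain ⟨v, hv⟩ := (ih hf).2.1 [a₁] (by simp)
        exact ⟨a₁ :: v, by simp [enc, hv]⟩
      | true => simp [stepF] at hstep
    · intro u₀ hc
      rw [Prod.mk.injEq] at hc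
      obtain ⟨rfl, ht⟩ := hc
      cases u₀ with
      | nil =>
        obtain ⟨rfl, -⟩ : t = none ∧ s = [] := by simpa using ht
        simp [stepF] at hstep
      | cons b u₁ =>
        obtain ⟨rfl, rfl⟩ : t = some b ∧ s = u₁.map some ++ [none] := by simpa using ht
        obtain ⟨a₁, a₂⟩ := a
        cases a₂ with
        | false =>
          simp only [M_step, stepF, Option.some.injEq, Prod.mk.injEq] at hstep
          obtain ⟨rfl, rfl⟩ := hstep
          obtain ⟨v, hv⟩ := (ih hf).2.1 (a₁ :: b :: u₁) (by simp)
          exact ⟨a₁ :: v, by simp [hv]⟩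
        | true =>
          by_cases hab : a₁ = b
          · subst hab
            simp only [M_step, stepF, if_pos rfl, Option.some.injEq, Prod.mk.injEq] at hstep
            obtain ⟨rfl, rfl⟩ := hstep
            have hv := (ih hf).2.2.1 u₁ (by simp)
            exact ⟨[], by simp [hv]⟩
          · simp [stepF, hab] at hstep
    · intro u₀ hc
      rw [Prod.mk.injEq] at hc
      obtain ⟨rfl, ht⟩ := hc
      cases u₀ with
      | nil =>
        obtain ⟨rfl, -⟩ : t = none ∧ s = [] := by simpa using ht
        simp [stepF] at hstep
      | cons b u₁ =>
        obtain ⟨rfl, rfl⟩ : t = some b ∧ s = u₁.map some ++ [none] := by simpa using ht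
        obtain ⟨a₁, a₂⟩ := a
        cases a₂ with
        | false => simp [stepF] at hstep
        | true =>
          by_cases hab : a₁ = b
          · subst hab
            simp only [M_step, stepF, if_pos rfl, Option.some.injEq, Prod.mk.injEq] at hstep
            obtain ⟨rfl, rfl⟩ := hstep
            have hv := (ih hf).2.2.1 u₁ (by simp)
            simp [hv]
          · simp [stepF, hab] at hstep
    · intro hq
      have hq' : q = St.F := hq
      subst hq'
      simp [stepF] at hstep
  | @eps q t s q' u w cf hstep hsteps ih =>
    intro hf
    refine ⟨?_, ?_, ?_, ?_⟩
    · intro hc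
      rw [Prod.mk.injEq] at hc
      obtain ⟨rfl, -⟩ := hc
      cases t <;> simp [stepF] at hstep
    · intro u₀ hc
      rw [Prod.mk.injEq] at hc
      obtain ⟨rfl, -⟩ := hc
      cases t <;> simp [stepF] at hstep
    · intro u₀ hc
      rw [Prod.mk.injEq] at hc
      obtain ⟨rfl, ht⟩ := hc
      cases u₀ with
      | nil =>
        obtain ⟨rfl, rfl⟩ : t = none ∧ s = [] := by simpa using ht
        simp only [M_step, stepF, Option.some.injEq, Prod.mk.injEq] at hstep
        obtain ⟨rfl, rfl⟩ := hstep
        have := (ih hf).2.2.2 rfl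
        simpa using this
      | cons b u₁ =>
        obtain ⟨rfl, -⟩ : t = some b ∧ s = u₁.map some ++ [none] := by simpa using ht
        simp [stepF] at hstep
    · intro hq
      have hq' : q = St.F := hq
      subst hq'
      simp [stepF] at hstep

lemma zip_rep (l : List Bool) (c : Bool) :
    l.zip (List.replicate l.length c) = l.map (fun a => (a, c)) := by
  induction l with
  | nil => simp
  | cons a l ih => simp [List.replicate_succ, ih]

end PalAdv

open PalAdv in
/-- The language `Pal = {w w^R : w ∈ {0,1}*}` of even-length binary
palindromes belongs to `DCFL/n`. -/
theorem pal_in_DCFLn :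
    InDCFLn { x : List Bool | ∃ w : List Bool, x = w ++ w.reverse } := by
  refine ⟨Bool, inferInstance,
    fun n => List.replicate (n / 2) false ++ List.replicate (n - n / 2) true,
    ?_, M.accepts, ⟨St, Sym, inferInstance, inferInstance, M, rfl⟩, ?_⟩
  · intro n
    simp [Nat.add_sub_cancel' (Nat.div_le_self n 2)]
  · intro x
    constructor
    · rintro ⟨w, rfl⟩
      have hlen : (w ++ w.reverse).length = w.length + w.length := by simp
      have h2 : (w.length + w.length) / 2 = w.length := by omega
      have h3 : w.length + w.length - w.length = w.length := by omega
      have hzip : (w ++ w.reverse).zip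
          (List.replicate ((w ++ w.reverse).length / 2) false ++
            List.replicate ((w ++ w.reverse).length - (w ++ w.reverse).length / 2) true)
          = enc w := by
        rw [hlen, h2, h3, List.zip_append (by simp)]
        have e2 := zip_rep w.reverse true
        simp only [List.length_reverse] at e2
        rw [zip_rep w false, e2]
        rfl
      exact hzip ▸ accepts_enc w
    · intro hx
      obtain ⟨q, s, hst, hq⟩ := hx
      have hfin : q = St.A ∨ q = St.F := by simpa using hq
      obtain ⟨w, hw⟩ := (sound hst hfin).1 rfl
      refine ⟨w, ?_⟩
      have hlen : x.length ≤ (List.replicate (x.length / 2) false ++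
          List.replicate (x.length - x.length / 2) true).length := by
        simp [Nat.add_sub_cancel' (Nat.div_le_self x.length 2)]
      have hmap := List.map_fst_zip hlen
      rw [hw] at hmap
      rw [← hmap]
      simp [enc, List.map_map, Function.comp_def]
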